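/- Let G be a graph and suppose the graph polynomial P(G) = ∏_{uv∈E, u<v}(u - v) over ℤ has a nonzero coefficient on a monomial ∏_{v∈V} v^{α_v}. Then for any assignment of lists L(v) of colours (subsets of ℤ) with |L(v)| ≥ α_v + 1 for all v, there exists a proper colouring c of G with c(v) ∈ L(v) for all v. -/

import Mathlib

open MvPolynomial

open Finsupp in
open MvPolynomial Finsupp

section Aux
variable {V : Type*} [DecidableEq V]

lemma divXpow (i : V) (a : ℤ) (k : ℕ) :
    ∃ q : MvPolynomial V ℤ, (X i : MvPolynomial V ℤ) ^ k = (X i - C a) * q + C (a ^ k) ∧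
      (q = 0 ∨ q.totalDegree + 1 ≤ k) := by
  induction k with
  | zero => exact ⟨0, by simp, Or.inl rfl⟩
  | succ k ih =>
    obtain ⟨q, hq, hdeg⟩ := ih
    refine ⟨X i * q + C (a ^ k), ?_, ?_⟩
    · have h : (X i : MvPolynomial V ℤ) ^ (k+1) = X i * (X i ^ k) := by ring
      have hc : (C (a ^ (k+1)) : MvPolynomial V ℤ) = C a * C (a ^ k) := by
        rw [← C_mul, ← pow_succ']
      rw [h, hq, hc]; ring
    · right
      rcases hdeg with rfl | hdeg
      · simp only [mul_zero, zero_add, totalDegree_C]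
        omega
      · have h1 : (X i * q : MvPolynomial V ℤ).totalDegree ≤ 1 + q.totalDegree :=
          (totalDegree_mul _ _).trans (add_le_add (totalDegree_X _).le le_rfl)
        have h3 := (totalDegree_add (X i * q) (C (a ^ k) : MvPolynomial V ℤ))
        have h2 : (C (a ^ k) : MvPolynomial V ℤ).totalDegree = 0 := totalDegree_C _
        rw [h2, Nat.max_zero] at h3
        omega

lemma sum_erase_aux (i : V) (m : V →₀ ℕ) :
    ((m.erase i).sum fun _ k => k) + m i = m.sum fun _ k => k := by
  conv_rhs => rw [← Finsupp.erase_add_single i m]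
  rw [Finsupp.sum_add_index' (fun _ => rfl) (fun _ _ _ => rfl),
    Finsupp.sum_single_index rfl]

lemma divMonomial (i : V) (a : ℤ) (m : V →₀ ℕ) (r : ℤ) :
    ∃ g : MvPolynomial V ℤ,
      (monomial m r : MvPolynomial V ℤ)
        = (X i - C a) * g + monomial (m.erase i) (r * a ^ (m i)) ∧
      (g = 0 ∨ g.totalDegree + 1 ≤ m.sum fun _ k => k) := by
  obtain ⟨q, hq, hdeg⟩ := divXpow i a (m i)
  refine ⟨monomial (m.erase i) r * q, ?_, ?_⟩
  · have hm : (monomial m r : MvPolynomial V ℤ)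
        = monomial (m.erase i) r * X i ^ (m i) := by
      rw [X_pow_eq_monomial, monomial_mul, mul_one, Finsupp.erase_add_single]
    have hm2 : (monomial (m.erase i) (r * a ^ (m i)) : MvPolynomial V ℤ)
        = monomial (m.erase i) r * C (a ^ (m i)) := by
      rw [C_apply, monomial_mul, add_zero]
    rw [hm, hq, hm2]; ring
  · rcases hdeg with rfl | hdeg
    · exact Or.inl (mul_zero _)
    right
    have h1 : (monomial (m.erase i) r * q : MvPolynomial V ℤ).totalDegree
        ≤ ((m.erase i).sum fun _ k => k) + q.totalDegree :=
      (totalDegree_mul _ _).trans (add_le_add (totalDegree_monomial_le _ _) le_rfl)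
    have h2 := sum_erase_aux i m
    omega

lemma coeff_erase_monomial (i : V) (m : V →₀ ℕ) (c : ℤ) (d : V →₀ ℕ) (hdi : d i ≠ 0) :
    coeff d (monomial (m.erase i) c : MvPolynomial V ℤ) = 0 := by
  rw [coeff_monomial]
  split
  · next h => exact absurd (h ▸ Finsupp.erase_same) (by simpa [← h] using hdi)
  · rfl

lemma eval_erase_monomial (i : V) (a : ℤ) (m : V →₀ ℕ) (r : ℤ) (s : V → ℤ) :
    eval s (monomial (m.erase i) (r * a ^ (m i)) : MvPolynomial V ℤ)
      = eval (Function.update s i a) (monomial m r : MvPolynomial V ℤ) := by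
  rw [eval_monomial, eval_monomial]
  have hsplit : m.prod (fun n e => Function.update s i a n ^ e)
      = (m.erase i).prod (fun n e => Function.update s i a n ^ e)
        * (Function.update s i a i) ^ (m i) := by
    conv_lhs => rw [← Finsupp.erase_add_single i m]
    rw [Finsupp.prod_add_index' (fun _ => pow_zero _) (fun _ _ _ => pow_add _ _ _)]
    congr 1
    exact Finsupp.prod_single_index (pow_zero _)
  have hcongr : (m.erase i).prod (fun n e => Function.update s i a n ^ e)
      = (m.erase i).prod (fun n e => s n ^ e) := by
    refine Finset.prod_congr rfl fun j hj => ?_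
    have hji : j ≠ i := by
      intro h; subst h
      simp [Finsupp.support_erase] at hj
    simp only [Function.update_of_ne hji]
  rw [hsplit, hcongr, Function.update_self]
  ring

lemma divPoly (i : V) (a : ℤ) (f : MvPolynomial V ℤ) :
    ∃ g h : MvPolynomial V ℤ, f = (X i - C a) * g + h ∧
      (∀ d : V →₀ ℕ, d i ≠ 0 → coeff d h = 0) ∧
      (∀ s : V → ℤ, eval s h = eval (Function.update s i a) f) ∧
      (g = 0 ∨ g.totalDegree + 1 ≤ f.totalDegree) := by
  choose g hg hgdeg using fun m : V →₀ ℕ => divMonomial i a m (coeff m f)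
  refine ⟨∑ m ∈ f.support, g m,
    ∑ m ∈ f.support, monomial (m.erase i) (coeff m f * a ^ (m i)), ?_, ?_, ?_, ?_⟩
  · conv_lhs => rw [f.as_sum]
    rw [Finset.mul_sum, ← Finset.sum_add_distrib]
    exact Finset.sum_congr rfl fun m _ => hg m
  · intro d hdi
    rw [coeff_sum]
    exact Finset.sum_eq_zero fun m _ => coeff_erase_monomial i m _ d hdi
  · intro s
    rw [map_sum]
    conv_rhs => rw [f.as_sum, map_sum]
    exact Finset.sum_congr rfl fun m _ => eval_erase_monomial i a m _ s
  · by_cases hall : ∀ m ∈ f.support, g m = 0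
    · exact Or.inl (Finset.sum_eq_zero hall)
    right
    push_neg at hall
    obtain ⟨m0, hm0, hgm0⟩ := hall
    have htd : 1 ≤ f.totalDegree := by
      have := (hgdeg m0).resolve_left hgm0
      have h2 : (m0.sum fun _ k => k) ≤ f.totalDegree := le_totalDegree hm0
      omega
    have : (∑ m ∈ f.support, g m).totalDegree ≤ f.totalDegree - 1 := by
      refine (totalDegree_finset_sum _ _).trans (Finset.sup_le fun m hm => ?_)
      rcases hgdeg m with h | h
      · rw [h, totalDegree_zero]; omega
      · have h2 : (m.sum fun _ k => k) ≤ f.totalDegree := le_totalDegree hm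
        omega
    omega

theorem combNull (n : ℕ) : ∀ (f : MvPolynomial V ℤ) (d : V →₀ ℕ) (S : V → Finset ℤ),
    (d.sum fun _ k => k) = n → f.totalDegree ≤ n → coeff d f ≠ 0 →
    (∀ v, d v < (S v).card) → ∃ s : V → ℤ, (∀ v, s v ∈ S v) ∧ eval s f ≠ 0 := by
  induction n with
  | zero =>
    intro f d S hsum htd hcoeff hcard
    have hd0 : d = 0 := by
      ext v
      simp only [Finsupp.coe_zero, Pi.zero_apply]
      by_contra hv
      have hmem : v ∈ d.support := Finsupp.mem_support_iff.mpr hv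
      have : d v ≤ d.sum fun _ k => k :=
        Finset.single_le_sum (fun _ _ => Nat.zero_le _) hmem
      omega
    choose s hs using fun v => Finset.card_pos.mp (lt_of_le_of_lt (Nat.zero_le _) (hcard v))
    refine ⟨s, hs, ?_⟩
    have hfC : f = C (coeff 0 f) := by
      ext e
      rcases eq_or_ne e 0 with rfl | he
      · rw [coeff_C, if_pos rfl]
      · rw [coeff_C, if_neg (Ne.symm he)]
        refine coeff_eq_zero_of_totalDegree_lt ?_
        have hss : (∑ j ∈ e.support, e j) = e.sum fun _ k => k := rfl
        rw [hss]
        have : 0 < e.sum fun _ k => k := by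
          by_contra h
          push_neg at h
          apply he
          ext v
          simp only [Finsupp.coe_zero, Pi.zero_apply]
          by_contra hv
          have hmem : v ∈ e.support := Finsupp.mem_support_iff.mpr hv
          have : e v ≤ e.sum fun _ k => k :=
            Finset.single_le_sum (fun _ _ => Nat.zero_le _) hmem
          omega
        omega
    rw [hfC, eval_C]
    rwa [hd0] at hcoeff
  | succ n ih =>
    intro f d S hsum htd hcoeff hcard
    by_contra hcon
    push_neg at hcon
    have hvanish : ∀ s : V → ℤ, (∀ v, s v ∈ S v) → eval s f = 0 := fun s hs => hcon s hs
    -- pick i with d i ≠ 0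
    have hdne : d ≠ 0 := by
      intro h; rw [h] at hsum; simp at hsum
    obtain ⟨i, hi⟩ : ∃ i, d i ≠ 0 := by
      by_contra h; push_neg at h; exact hdne (Finsupp.ext h)
    obtain ⟨a, ha⟩ := Finset.card_pos.mp (lt_of_le_of_lt (Nat.zero_le _) (hcard i))
    obtain ⟨g, h, heq, hhcoeff, heval, hgdeg⟩ := divPoly i a f
    -- total degree of f equals n+1
    have htdeq : f.totalDegree = n + 1 := by
      have h1 : (d.sum fun _ k => k) ≤ f.totalDegree :=
        le_totalDegree (Finsupp.mem_support_iff.mpr hcoeff)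
      omega
    -- coefficient of d - single i 1 in g
    set d' : V →₀ ℕ := d - Finsupp.single i 1 with hd'
    have hrestore : Finsupp.single i 1 + d' = d := by
      ext v
      rcases eq_or_ne v i with rfl | hv
      · simp [hd', Finsupp.sub_apply, Finsupp.single_apply]
        omega
      · simp [hd', Finsupp.sub_apply, Finsupp.single_apply, hv, Ne.symm hv]
    have hcg : coeff d g ≠ 0 → False := by
      intro hcg
      have := coeff_eq_zero_of_totalDegree_lt (f := g) (d := d) ?_
      · exact hcg this
      · have hss : (∑ j ∈ d.support, d j) = d.sum fun _ k => k := rfl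
        rw [hss]
        rcases hgdeg with rfl | hb
        · simp at hcg
        · omega
    have hcdg : coeff d g = 0 := by
      by_contra hc; exact hcg hc
    have hkey : coeff d' g = coeff d f := by
      rw [heq, coeff_add, hhcoeff d hi, add_zero, sub_mul, coeff_sub,
        ← hrestore, coeff_X_mul]
      have : coeff (Finsupp.single i 1 + d') (C a * g) = a * coeff (Finsupp.single i 1 + d') g := by
        rw [coeff_C_mul]
      rw [this, hrestore, hcdg, mul_zero, sub_zero]
    have hgne : g ≠ 0 := by
      intro h0
      rw [h0, coeff_zero] at hkey
      exact hcoeff hkey.symm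
    have hgtd : g.totalDegree ≤ n := by
      rcases hgdeg with h0 | hb
      · exact absurd h0 hgne
      · omega
    -- new lists
    set S' : V → Finset ℤ := fun v => if v = i then (S i).erase a else S v with hS'
    have hd'sum : (d'.sum fun _ k => k) = n := by
      have h1 : ((d.erase i).sum fun _ k => k) + d i = d.sum fun _ k => k :=
        sum_erase_aux i d
      have h2 : d' = (d.erase i) + Finsupp.single i (d i - 1) := by
        ext v
        rcases eq_or_ne v i with rfl | hv
        · simp [hd', Finsupp.sub_apply, Finsupp.single_apply]
        · simp [hd', Finsupp.sub_apply, Finsupp.single_apply, hv, Ne.symm hv, Finsupp.erase_ne hv]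
      rw [h2, Finsupp.sum_add_index' (fun _ => rfl) (fun _ _ _ => rfl),
        Finsupp.sum_single_index rfl]
      omega
    have hS'i : S' i = (S i).erase a := if_pos rfl
    have hS'ne : ∀ v, v ≠ i → S' v = S v := fun v hv => if_neg hv
    have hd'card : ∀ v, d' v < (S' v).card := by
      intro v
      rcases eq_or_ne v i with rfl | hv
      · have h5 : d' v = d v - 1 := by simp [hd', Finsupp.sub_apply, Finsupp.single_apply]
        rw [h5, hS'i, Finset.card_erase_of_mem ha]
        have := hcard v
        omega
      · have h5 : d' v = d v := by
          simp [hd', Finsupp.sub_apply, Finsupp.single_apply, Ne.symm hv]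
        rw [h5, hS'ne v hv]
        exact hcard v
    obtain ⟨s, hsmem, hsg⟩ := ih g d' S' hd'sum hgtd (hkey ▸ hcoeff) hd'card
    have hsorig : ∀ v, s v ∈ S v := by
      intro v
      have h6 := hsmem v
      rcases eq_or_ne v i with rfl | hv
      · rw [hS'i] at h6
        exact Finset.mem_of_mem_erase h6
      · rwa [hS'ne v hv] at h6
    have hsine : s i ≠ a := by
      have h6 := hsmem i
      rw [hS'i] at h6
      exact Finset.ne_of_mem_erase h6
    have hupd : ∀ v, Function.update s i a v ∈ S v := by
      intro v
      rcases eq_or_ne v i with rfl | hv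
      · rwa [Function.update_self]
      · rw [Function.update_of_ne hv]; exact hsorig v
    have h1 : eval s f = 0 := hvanish s hsorig
    have h2 : eval s h = 0 := by
      rw [heval s]
      exact hvanish _ hupd
    rw [heq, map_add, map_mul, h2, add_zero] at h1
    have h3 : eval s (X i - C a) = s i - a := by simp
    rw [h3] at h1
    rcases mul_eq_zero.mp h1 with h4 | h4
    · exact hsine (sub_eq_zero.mp h4)
    · exact hsg h4
end Aux


/-- The graph polynomial `∏_{uv ∈ E, u < v} (u - v)` of a finite graph with linearly
ordered vertices. -/
noncomputable def graphPoly {V : Type*} [Fintype V] [LinearOrder V]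
    (G : SimpleGraph V) [DecidableRel G.Adj] : MvPolynomial V ℤ :=
  ∏ p ∈ Finset.univ.filter (fun p : V × V => p.1 < p.2 ∧ G.Adj p.1 p.2),
    (X p.1 - X p.2)

/-- Combinatorial Nullstellensatz for the graph polynomial: if the monomial with
exponent vector `d` has nonzero coefficient in `P(G)`, then for any lists
`L v ⊆ ℤ` with `|L v| ≥ d v + 1` there is a proper colouring of `G` from the lists. -/
theorem stmt_12 {V : Type*} [Fintype V] [LinearOrder V]
    (G : SimpleGraph V) [DecidableRel G.Adj]
    (d : V →₀ ℕ) (hd : coeff d (graphPoly G) ≠ 0)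
    (L : V → Finset ℤ) (hL : ∀ v, d v + 1 ≤ (L v).card) :
    ∃ c : V → ℤ, (∀ v, c v ∈ L v) ∧ ∀ u v, G.Adj u v → c u ≠ c v := by
  classical
  set E := Finset.univ.filter (fun p : V × V => p.1 < p.2 ∧ G.Adj p.1 p.2) with hE
  have hom : (graphPoly G).IsHomogeneous E.card := by
    have := IsHomogeneous.prod E (fun p : V × V => (X p.1 - X p.2 : MvPolynomial V ℤ))
      (fun _ => 1) (fun p _ => (isHomogeneous_X _ _).sub (isHomogeneous_X _ _))
    simpa [graphPoly, Finset.sum_const] using this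
  have hsum : (d.sum fun _ k => k) = E.card := by
    have h1 := hom hd
    have h2 : (Finsupp.weight 1) d = ∑ i ∈ d.support, d i := by
      rw [Finsupp.weight_apply]; simp [Finsupp.sum]
    rw [h2] at h1
    exact h1
  have htd : (graphPoly G).totalDegree ≤ E.card := hom.totalDegree_le
  obtain ⟨c, hc, hcne⟩ := combNull E.card (graphPoly G) d L hsum htd hd
    (fun v => by have := hL v; omega)
  refine ⟨c, hc, ?_⟩
  have hfac : ∀ p ∈ E, eval c ((X p.1 - X p.2 : MvPolynomial V ℤ)) ≠ 0 := by
    rw [graphPoly, map_prod] at hcne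
    exact Finset.prod_ne_zero_iff.mp hcne
  have key : ∀ u v, u < v → G.Adj u v → c u ≠ c v := by
    intro u v huv hadj hcc
    have hmem : (u, v) ∈ E := by
      rw [hE]; simp [huv, hadj]
    have := hfac (u, v) hmem
    simp [hcc] at this
  intro u v hadj
  rcases lt_or_gt_of_ne (G.ne_of_adj hadj) with h | h
  · exact key u v h hadj
  · exact fun hcc => key v u h hadj.symm hcc.symm
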